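/- Suppose a group G acts on a uniform space X and the action is both neutral and uniformly properly discontinuous. Then the projection p: X → X/G is a uniform covering map, i.e., it generates the uniform structure on X/G and has the unique chain lifting property (chain lifting together with uniqueness of chain lifts). -/

import Mathlib

open scoped Uniformity

/-- Symmetric relation (Mathlib's removed `SymmetricRel`, old definition). -/
def SymmetricRel {α : Type*} (V : Set (α × α)) : Prop :=
  Prod.swap ⁻¹' V = V

theorem SymmetricRel.mk_mem_comm {α : Type*} {V : Set (α × α)} (hV : SymmetricRel V)
    {x y : α} : (x, y) ∈ V ↔ (y, x) ∈ V :=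
  Set.ext_iff.1 hV (y, x)

/-- An `E`-chain: consecutive members of the list are `E`-related. -/
def ChainIn {α : Type*} (E : Set (α × α)) (c : List α) : Prop :=
  c.Chain' fun a b => (a, b) ∈ E

/-- The image `f(E)` of a relation under a map. -/
def imgRel {α β : Type*} (f : α → β) (E : Set (α × α)) : Set (β × β) :=
  Prod.map f f '' E

/-- The orbit projection `p : X → X/G`. -/
def proj (G X : Type*) [Group G] [MulAction G X] :
    X → Quotient (MulAction.orbitRel G X) :=
  Quotient.mk (MulAction.orbitRel G X)

/-- `G_F`: the subgroup of `G` generated by `S_F = {h | (x, h • x) ∈ F for some x}`. -/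
def GF (G : Type*) {X : Type*} [Group G] [MulAction G X] (F : Set (X × X)) : Subgroup G :=
  Subgroup.closure {h : G | ∃ x : X, (x, h • x) ∈ F}

/-- Chain lifting property for `f : X → Y`: for every (symmetric) entourage `E` of `X`
there is an entourage `F` such that every `f(F)`-chain starting at `f x₀` lifts to an
`E`-chain starting at `x₀`. -/
def HasChainLifting {X Y : Type*} [UniformSpace X] (f : X → Y) : Prop :=
  ∀ E ∈ 𝓤 X, SymmetricRel E → ∃ F ∈ 𝓤 X, SymmetricRel F ∧
    ∀ (x₀ : X) (d : List Y), ChainIn (imgRel f F) d → d.head? = some (f x₀) →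
      ∃ c : List X, ChainIn E c ∧ c.head? = some x₀ ∧ c.map f = d

/-- Uniqueness of chain lifts: there is an entourage `F` such that two `F`-chains with the
same origin and the same image are equal. -/
def HasUniqueChainLifts {X Y : Type*} [UniformSpace X] (f : X → Y) : Prop :=
  ∃ F ∈ 𝓤 X, SymmetricRel F ∧
    ∀ α β : List X, ChainIn F α → ChainIn F β →
      α.head? = β.head? → α.map f = β.map f → α = β

/-- Approximate uniqueness of chain lifts: for every entourage `E` there is an entourage `F`
such that two `F`-chains with the same origin and the same image are `E`-close. -/
def HasApproxUniqueChainLifts {X Y : Type*} [UniformSpace X] (f : X → Y) : Prop :=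
  ∀ E ∈ 𝓤 X, SymmetricRel E → ∃ F ∈ 𝓤 X, SymmetricRel F ∧
    ∀ α β : List X, ChainIn F α → ChainIn F β →
      α.head? = β.head? → α.map f = β.map f →
        List.Forall₂ (fun a b => (a, b) ∈ E) α β

/-- Neutral action. -/
def Neutral (G X : Type*) [Group G] [MulAction G X] [UniformSpace X] : Prop :=
  ∀ E ∈ 𝓤 X, SymmetricRel E → ∃ F ∈ 𝓤 X, SymmetricRel F ∧
    ∀ (x y : X) (h : G), (x, h • y) ∈ F → ∃ g : G, (g • x, y) ∈ E

/-- Uniformly properly discontinuous action. -/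
def UnifProperlyDiscontinuous (G X : Type*) [Group G] [MulAction G X] [UniformSpace X] : Prop :=
  ∃ E ∈ 𝓤 X, SymmetricRel E ∧ ∀ (x : X) (g : G), (x, g • x) ∈ E → g = 1

/-- Equicontinuous action. -/
def EquicontinuousAction (G X : Type*) [Group G] [MulAction G X] [UniformSpace X] : Prop :=
  ∀ E ∈ 𝓤 X, ∃ F ∈ 𝓤 X, ∀ (g : G) (x y : X), (x, y) ∈ F → (g • x, g • y) ∈ E

/-- Small scale uniformly continuous action. -/
def SSUnifCont (G X : Type*) [Group G] [MulAction G X] [UniformSpace X] : Prop :=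
  ∀ E ∈ 𝓤 X, SymmetricRel E → ∃ F ∈ 𝓤 X, SymmetricRel F ∧
    ∀ g ∈ GF G F, {q : X × X | (g • q.1, g • q.2) ∈ E} ∈ 𝓤 X

/-- Small scale uniformly equicontinuous action. -/
def SSUnifEquicont (G X : Type*) [Group G] [MulAction G X] [UniformSpace X] : Prop :=
  ∀ E ∈ 𝓤 X, SymmetricRel E → ∃ F ∈ 𝓤 X, SymmetricRel F ∧
    ∀ g ∈ GF G F, ∀ x y : X, (x, y) ∈ F → (g • x, g • y) ∈ E

/-- Small scale bounded orbits: the orbits of `G_F` are `E`-bounded. -/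
def SSBoundedOrbits (G X : Type*) [Group G] [MulAction G X] [UniformSpace X] : Prop :=
  ∀ E ∈ 𝓤 X, SymmetricRel E → ∃ F ∈ 𝓤 X, SymmetricRel F ∧
    ∀ x : X, ∀ g ∈ GF G F, ∀ g' ∈ GF G F, (g • x, g' • x) ∈ E

/-- Chain connected uniform space. -/
def ChainConnectedU (X : Type*) [UniformSpace X] : Prop :=
  ∀ E ∈ 𝓤 X, SymmetricRel E → ∀ x y : X,
    ∃ c : List X, ChainIn E c ∧ c.head? = some x ∧ c.getLast? = some y

lemma proj_eq_iff {G X : Type*} [Group G] [MulAction G X] {a b : X} :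
    proj G X a = proj G X b ↔ ∃ g : G, g • b = a := by
  unfold proj
  rw [Quotient.eq]
  exact MulAction.orbitRel_apply.trans MulAction.mem_orbit_iff

lemma proj_smul {G X : Type*} [Group G] [MulAction G X] (g : G) (b : X) :
    proj G X (g • b) = proj G X b := proj_eq_iff.mpr ⟨g, rfl⟩

lemma lift_aux {G X : Type*} [Group G] [MulAction G X]
    (E F : Set (X × X)) (hEsym : SymmetricRel E) (hFsym : SymmetricRel F)
    (hEF : ∀ (x y : X) (h : G), (x, h • y) ∈ F → ∃ g : G, (g • x, y) ∈ E) :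
    ∀ (d : List (Quotient (MulAction.orbitRel G X))) (x₀ : X),
      ChainIn (imgRel (proj G X) F) (proj G X x₀ :: d) →
        ∃ c : List X, ChainIn E (x₀ :: c) ∧ (x₀ :: c).map (proj G X) = proj G X x₀ :: d := by
  intro d
  induction d with
  | nil => intro x₀ _; exact ⟨[], List.isChain_singleton _, rfl⟩
  | cons d₁ d ih =>
    intro x₀ hch
    rw [ChainIn, List.Chain', List.isChain_cons_cons] at hch
    obtain ⟨⟨⟨a, b⟩, habF, hab⟩, hch'⟩ := hch
    simp only [Prod.map] at hab
    obtain ⟨h1, h2⟩ := Prod.mk.injEq .. ▸ hab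
    -- proj a = proj x₀, proj b = d₁
    obtain ⟨g₀, hg₀⟩ := proj_eq_iff.mp h1
    have hbF : (b, g₀ • x₀) ∈ F := by
      rw [hg₀]; exact hFsym.mk_mem_comm.mp habF
    obtain ⟨g, hg⟩ := hEF b x₀ g₀ hbF
    have hE : (x₀, g • b) ∈ E := hEsym.mk_mem_comm.mp hg
    have hproj : proj G X (g • b) = d₁ := (proj_smul g b).trans h2
    have hch'' : ChainIn (imgRel (proj G X) F) (proj G X (g • b) :: d) := by
      rw [hproj]; exact hch'
    obtain ⟨c, hc1, hc2⟩ := ih (g • b) hch''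
    refine ⟨g • b :: c, ?_, ?_⟩
    · rw [ChainIn, List.Chain', List.isChain_cons_cons]; exact ⟨hE, hc1⟩
    · simp only [List.map_cons, List.cons.injEq] at hc2 ⊢
      exact ⟨trivial, hproj, hc2.2⟩

lemma uniq_aux {G X : Type*} [Group G] [MulAction G X]
    (E₀ F : Set (X × X)) (hFsym : SymmetricRel F)
    (hcomp : SetRel.comp F F ⊆ E₀)
    (hupd : ∀ (x : X) (g : G), (x, g • x) ∈ E₀ → g = 1) :
    ∀ α β : List X, ChainIn F α → ChainIn F β →
      α.head? = β.head? → α.map (proj G X) = β.map (proj G X) → α = β := by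
  intro α
  induction α with
  | nil =>
    intro β _ _ _ hmap
    cases β with
    | nil => rfl
    | cons b β' => simp at hmap
  | cons a α' ih =>
    intro β hα hβ hhead hmap
    cases β with
    | nil => simp at hmap
    | cons b β' =>
      simp only [List.head?_cons, Option.some.injEq] at hhead
      subst hhead
      simp only [List.map_cons, List.cons.injEq] at hmap
      cases α' with
      | nil =>
        cases β' with
        | nil => rfl
        | cons b' β'' => simp at hmap
      | cons a' α'' =>
        cases β' with
        | nil => simp at hmap
        | cons b' β'' =>
          rw [ChainIn, List.Chain', List.isChain_cons_cons] at hα hβ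
          have hmap' := hmap.2
          simp only [List.map_cons, List.cons.injEq] at hmap'
          obtain ⟨g, hg⟩ := proj_eq_iff.mp hmap'.1.symm
          have hE₀ : (a', g • a') ∈ E₀ := by
            apply hcomp
            exact ⟨a, hFsym.mk_mem_comm.mp hα.1, hg ▸ hβ.1⟩
          have hg1 : g = 1 := hupd a' g hE₀
          have hab : a' = b' := by rw [← hg, hg1, one_smul]
          subst hab
          have := ih (a' :: β'') hα.2 hβ.2 rfl (by simp [hmap'.2])
          rw [this]

/-- A neutral and uniformly properly discontinuous action induces a uniform covering map:
the projection generates the uniform structure on `X/G` (by definition of the quotient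
structure) and has the unique chain lifting property. -/
theorem stmt3 (G X : Type*) [Group G] [MulAction G X] [UniformSpace X]
    (hneutral : Neutral G X) (hupd : UnifProperlyDiscontinuous G X) :
    HasChainLifting (proj G X) ∧ HasUniqueChainLifts (proj G X) := by
  obtain ⟨E₀, hE₀u, hE₀sym, hE₀⟩ := hupd
  constructor
  · -- chain lifting
    intro E hEu hEsym
    obtain ⟨F, hFu, hFsym, hEF⟩ := hneutral E hEu hEsym
    refine ⟨F, hFu, hFsym, ?_⟩
    intro x₀ d hch hhead
    cases d with
    | nil => simp at hhead
    | cons d₀ d' =>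
      simp only [List.head?_cons, Option.some.injEq] at hhead
      subst hhead
      obtain ⟨c, hc1, hc2⟩ := lift_aux E F hEsym hFsym hEF d' x₀ hch
      exact ⟨x₀ :: c, hc1, rfl, hc2⟩
  · -- uniqueness of chain lifts
    obtain ⟨F, hFu, hFsym, hcomp⟩ := comp_symm_mem_uniformity_sets hE₀u
    exact ⟨F, hFu, Set.ext fun ⟨_, _⟩ => SetRel.comm F,
      uniq_aux E₀ F (Set.ext fun ⟨_, _⟩ => SetRel.comm F) hcomp hE₀⟩
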